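/- Let f, g ∈ ℝ[x,y] and ξ a nonzero vector in ℝ². If f^ξ and g^ξ are the symbolic restrictions of f and g to the faces of their Newton polygons in direction ξ, and Jac(f^ξ, g^ξ) ≠ 0, then the symbolic restriction of Jac(f,g) in direction ξ equals Jac(f^ξ, g^ξ). -/

import Mathlib

open MvPolynomial

noncomputable def Jac (f g : MvPolynomial (Fin 2) ℝ) : MvPolynomial (Fin 2) ℝ :=
  pderiv 0 f * pderiv 1 g - pderiv 1 f * pderiv 0 g

open Classical in
/-- The symbolic restriction of `h` to the face of its Newton polygon in direction `ξ`. -/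
noncomputable def face (ξ : ℝ × ℝ) (h : MvPolynomial (Fin 2) ℝ) : MvPolynomial (Fin 2) ℝ :=
  ∑ m ∈ h.support.filter (fun m => ∀ m' ∈ h.support,
      ξ.1 * (m' 0 : ℝ) + ξ.2 * (m' 1 : ℝ) ≤ ξ.1 * (m 0 : ℝ) + ξ.2 * (m 1 : ℝ)),
    monomial m (h.coeff m)

namespace FaceJacAux

noncomputable def w (ξ : ℝ × ℝ) (m : Fin 2 →₀ ℕ) : ℝ :=
  ξ.1 * (m 0 : ℝ) + ξ.2 * (m 1 : ℝ)

lemma w_add (ξ : ℝ × ℝ) (a b : Fin 2 →₀ ℕ) : w ξ (a + b) = w ξ a + w ξ b := by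
  simp only [w, Finsupp.add_apply]
  push_cast
  ring

lemma coeff_pderiv (i : Fin 2) (p : MvPolynomial (Fin 2) ℝ) (m : Fin 2 →₀ ℕ) :
    coeff m (pderiv i p) = ((m i : ℝ) + 1) * coeff (m + Finsupp.single i 1) p := by
  induction p using MvPolynomial.induction_on' with
  | add p q hp hq => simp [hp, hq, mul_add]
  | monomial s a =>
    rw [pderiv_monomial, coeff_monomial, coeff_monomial]
    by_cases hs : s i = 0
    · have h1 : s ≠ m + Finsupp.single i 1 := by
        intro h
        apply_fun (fun t => t i) at h
        simp [Finsupp.single_apply] at h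
        omega
      rw [if_neg h1, mul_zero, hs]
      split <;> simp
    · have hss : s - Finsupp.single i 1 + Finsupp.single i 1 = s := by
        ext j
        simp only [Finsupp.add_apply, Finsupp.tsub_apply, Finsupp.single_apply]
        rcases eq_or_ne i j with rfl | hij
        · simp only [if_pos rfl, if_true]
          omega
        · simp [hij]
      by_cases hm : s - Finsupp.single i 1 = m
      · rw [if_pos hm, if_pos (by rw [← hm, hss])]
        have h2 : m i = s i - 1 := by
          rw [← hm]; simp [Finsupp.tsub_apply]
        rw [h2, Nat.cast_sub (Nat.one_le_iff_ne_zero.mpr hs)]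
        push_cast
        ring
      · rw [if_neg hm, if_neg]
        · ring
        · intro h
          apply hm
          have : s - Finsupp.single i 1 = (m + Finsupp.single i 1) - Finsupp.single i 1 := by
            rw [← h]
          simpa using this

lemma support_pderiv {i : Fin 2} {p : MvPolynomial (Fin 2) ℝ} {m : Fin 2 →₀ ℕ}
    (h : m ∈ (pderiv i p).support) : m + Finsupp.single i 1 ∈ p.support := by
  rw [mem_support_iff] at h ⊢
  intro hc
  rw [coeff_pderiv, hc, mul_zero] at h
  exact h rfl

lemma w_single (ξ : ℝ × ℝ) : w ξ (Finsupp.single (0 : Fin 2) 1) = ξ.1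
    ∧ w ξ (Finsupp.single (1 : Fin 2) 1) = ξ.2 := by
  constructor <;> simp [w, Finsupp.single_apply]

open Classical in
lemma coeff_face (ξ : ℝ × ℝ) (h : MvPolynomial (Fin 2) ℝ) (m : Fin 2 →₀ ℕ) :
    coeff m (face ξ h) =
      if m ∈ h.support ∧ ∀ m' ∈ h.support, w ξ m' ≤ w ξ m then coeff m h else 0 := by
  classical
  rw [face, coeff_sum]
  simp only [coeff_monomial]
  rw [Finset.sum_ite_eq' _ m (fun m => h.coeff m)]
  simp only [Finset.mem_filter, w]
  congr

/-- The key abstract lemma. -/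
lemma face_eq_of_decomp (ξ : ℝ × ℝ) (P Q R : MvPolynomial (Fin 2) ℝ) (E : ℝ)
    (hPQR : P = Q + R) (hQ : Q ≠ 0)
    (hQw : ∀ m ∈ Q.support, w ξ m = E)
    (hRw : ∀ m ∈ R.support, w ξ m < E) :
    face ξ P = Q := by
  classical
  have hcoeff : ∀ m, coeff m P = coeff m Q + coeff m R := by
    intro m; rw [hPQR, coeff_add]
  have hsupP : ∀ m ∈ P.support, w ξ m ≤ E := by
    intro m hm
    rw [mem_support_iff, hcoeff] at hm
    by_cases hQm : m ∈ Q.support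
    · exact le_of_eq (hQw m hQm)
    · by_cases hRm : m ∈ R.support
      · exact le_of_lt (hRw m hRm)
      · rw [notMem_support_iff] at hQm hRm
        exact absurd (by rw [hQm, hRm, add_zero]) hm
  obtain ⟨m₀, hm₀⟩ := exists_coeff_ne_zero hQ
  have hm₀Q : m₀ ∈ Q.support := mem_support_iff.mpr hm₀
  have hm₀E : w ξ m₀ = E := hQw m₀ hm₀Q
  have hm₀R : coeff m₀ R = 0 := by
    by_contra hc
    exact absurd hm₀E (ne_of_lt (hRw m₀ (mem_support_iff.mpr hc)))
  have hm₀P : m₀ ∈ P.support := by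
    rw [mem_support_iff, hcoeff, hm₀R, add_zero]; exact hm₀
  apply MvPolynomial.ext
  intro m
  rw [coeff_face]
  by_cases hcond : m ∈ P.support ∧ ∀ m' ∈ P.support, w ξ m' ≤ w ξ m
  · rw [if_pos hcond]
    obtain ⟨hmP, hmax⟩ := hcond
    have hwm : w ξ m = E :=
      le_antisymm (hsupP m hmP) (hm₀E ▸ hmax m₀ hm₀P)
    have hmR : coeff m R = 0 := by
      by_contra hc
      exact absurd hwm (ne_of_lt (hRw m (mem_support_iff.mpr hc)))
    rw [hcoeff, hmR, add_zero]
  · rw [if_neg hcond]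
    by_contra hc
    have hmQ : m ∈ Q.support := mem_support_iff.mpr (fun h => hc h.symm)
    have hwm : w ξ m = E := hQw m hmQ
    have hmR : coeff m R = 0 := by
      by_contra hcc
      exact absurd hwm (ne_of_lt (hRw m (mem_support_iff.mpr hcc)))
    have hmP : m ∈ P.support := by
      rw [mem_support_iff, hcoeff, hmR, add_zero]
      exact mem_support_iff.mp hmQ
    exact hcond ⟨hmP, fun m' hm' => hwm ▸ hsupP m' hm'⟩

lemma support_mul_w {ξ : ℝ × ℝ} {p q : MvPolynomial (Fin 2) ℝ} {a b : ℝ}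
    (hp : ∀ m ∈ p.support, w ξ m = a) (hq : ∀ m ∈ q.support, w ξ m = b) :
    ∀ m ∈ (p * q).support, w ξ m = a + b := by
  classical
  intro m hm
  obtain ⟨u, hu, v, hv, huv⟩ := Finset.mem_add.mp (support_mul p q hm)
  rw [← huv, w_add, hp u hu, hq v hv]

lemma support_mul_w_lt {ξ : ℝ × ℝ} {p q : MvPolynomial (Fin 2) ℝ} {a b : ℝ}
    (hp : ∀ m ∈ p.support, w ξ m ≤ a) (hq : ∀ m ∈ q.support, w ξ m ≤ b)
    (hstrict : (∀ m ∈ p.support, w ξ m < a) ∨ (∀ m ∈ q.support, w ξ m < b)) :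
    ∀ m ∈ (p * q).support, w ξ m < a + b := by
  classical
  intro m hm
  obtain ⟨u, hu, v, hv, huv⟩ := Finset.mem_add.mp (support_mul p q hm)
  rw [← huv, w_add]
  rcases hstrict with h | h
  · exact add_lt_add_of_lt_of_le (h u hu) (hq v hv)
  · exact add_lt_add_of_le_of_lt (hp u hu) (h v hv)

end FaceJacAux

open FaceJacAux in
theorem face_jac_eq_jac_face (f g : MvPolynomial (Fin 2) ℝ)
    (ξ : ℝ × ℝ) (hξ : ξ ≠ 0)
    (hJ : Jac (face ξ f) (face ξ g) ≠ 0) :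
    face ξ (Jac f g) = Jac (face ξ f) (face ξ g) := by
  classical
  have hf : f ≠ 0 := by
    rintro rfl
    apply hJ
    simp [face, Jac]
  have hg : g ≠ 0 := by
    rintro rfl
    apply hJ
    simp [face, Jac]
  have hfne : f.support.Nonempty := support_nonempty.mpr hf
  have hgne : g.support.Nonempty := support_nonempty.mpr hg
  set Df := f.support.sup' hfne (w ξ) with hDf
  set Dg := g.support.sup' hgne (w ξ) with hDg
  set F := face ξ f with hF
  set G := face ξ g with hG
  -- supports of faces
  have hface_supp : ∀ (h : MvPolynomial (Fin 2) ℝ) (m : Fin 2 →₀ ℕ),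
      m ∈ (face ξ h).support → m ∈ h.support ∧ ∀ m' ∈ h.support, w ξ m' ≤ w ξ m := by
    intro h m hm
    rw [mem_support_iff, coeff_face] at hm
    by_contra hc
    rw [if_neg hc] at hm
    exact hm rfl
  have hFw : ∀ m ∈ F.support, w ξ m = Df := by
    intro m hm
    obtain ⟨hm1, hm2⟩ := hface_supp f m hm
    exact le_antisymm (Finset.le_sup' (w ξ) hm1) (Finset.sup'_le _ _ hm2)
  have hGw : ∀ m ∈ G.support, w ξ m = Dg := by
    intro m hm
    obtain ⟨hm1, hm2⟩ := hface_supp g m hm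
    exact le_antisymm (Finset.le_sup' (w ξ) hm1) (Finset.sup'_le _ _ hm2)
  -- remainders
  have hrem : ∀ (h : MvPolynomial (Fin 2) ℝ) (hne : h.support.Nonempty)
      (m : Fin 2 →₀ ℕ), m ∈ (h - face ξ h).support →
      w ξ m < h.support.sup' hne (w ξ) := by
    intro h hne m hm
    rw [mem_support_iff, coeff_sub, coeff_face] at hm
    by_cases hcond : m ∈ h.support ∧ ∀ m' ∈ h.support, w ξ m' ≤ w ξ m
    · rw [if_pos hcond, sub_self] at hm
      exact absurd rfl hm
    · rw [if_neg hcond, sub_zero] at hm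
      have hmh : m ∈ h.support := mem_support_iff.mpr hm
      push_neg at hcond
      obtain ⟨m', hm', hlt⟩ := hcond hmh
      exact lt_of_lt_of_le hlt (Finset.le_sup' (w ξ) hm')
  have hfw' : ∀ m ∈ (f - F).support, w ξ m < Df := hrem f hfne
  have hgw' : ∀ m ∈ (g - G).support, w ξ m < Dg := hrem g hgne
  -- weights of pderivs
  have hws := w_single ξ
  have hpdF0 : ∀ m ∈ (pderiv 0 F).support, w ξ m = Df - ξ.1 := by
    intro m hm
    have := hFw _ (support_pderiv hm)
    rw [w_add, hws.1] at this
    linarith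
  have hpdF1 : ∀ m ∈ (pderiv 1 F).support, w ξ m = Df - ξ.2 := by
    intro m hm
    have := hFw _ (support_pderiv hm)
    rw [w_add, hws.2] at this
    linarith
  have hpdG0 : ∀ m ∈ (pderiv 0 G).support, w ξ m = Dg - ξ.1 := by
    intro m hm
    have := hGw _ (support_pderiv hm)
    rw [w_add, hws.1] at this
    linarith
  have hpdG1 : ∀ m ∈ (pderiv 1 G).support, w ξ m = Dg - ξ.2 := by
    intro m hm
    have := hGw _ (support_pderiv hm)
    rw [w_add, hws.2] at this
    linarith
  have hpdf0 : ∀ m ∈ (pderiv 0 (f - F)).support, w ξ m < Df - ξ.1 := by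
    intro m hm
    have := hfw' _ (support_pderiv hm)
    rw [w_add, hws.1] at this
    linarith
  have hpdf1 : ∀ m ∈ (pderiv 1 (f - F)).support, w ξ m < Df - ξ.2 := by
    intro m hm
    have := hfw' _ (support_pderiv hm)
    rw [w_add, hws.2] at this
    linarith
  have hpdg0 : ∀ m ∈ (pderiv 0 (g - G)).support, w ξ m < Dg - ξ.1 := by
    intro m hm
    have := hgw' _ (support_pderiv hm)
    rw [w_add, hws.1] at this
    linarith
  have hpdg1 : ∀ m ∈ (pderiv 1 (g - G)).support, w ξ m < Dg - ξ.2 := by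
    intro m hm
    have := hgw' _ (support_pderiv hm)
    rw [w_add, hws.2] at this
    linarith
  set E : ℝ := Df + Dg - ξ.1 - ξ.2 with hE
  -- decomposition
  set R : MvPolynomial (Fin 2) ℝ := Jac F (g - G) + Jac (f - F) G + Jac (f - F) (g - G)
    with hR
  have hdecomp : Jac f g = Jac F G + R := by
    have h1 : f = F + (f - F) := by ring
    have h2 : g = G + (g - G) := by ring
    rw [hR]
    simp only [Jac]
    rw [h1, h2]
    simp only [map_add]
    ring
  -- weight of Jac F G
  have hQw : ∀ m ∈ (Jac F G).support, w ξ m = E := by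
    intro m hm
    have hsub := MvPolynomial.support_sub _ _ _ hm
    rcases Finset.mem_union.mp hsub with h | h
    · have := support_mul_w hpdF0 hpdG1 m h
      rw [this]; ring
    · have := support_mul_w hpdF1 hpdG0 m h
      rw [this]; ring
  -- weight of R
  have hjac_lt : ∀ (p q : MvPolynomial (Fin 2) ℝ) (a b : ℝ),
      (∀ m ∈ (pderiv 0 p).support, w ξ m ≤ a - ξ.1) →
      (∀ m ∈ (pderiv 1 p).support, w ξ m ≤ a - ξ.2) →
      (∀ m ∈ (pderiv 0 q).support, w ξ m ≤ b - ξ.1) →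
      (∀ m ∈ (pderiv 1 q).support, w ξ m ≤ b - ξ.2) →
      ((∀ m ∈ (pderiv 0 p).support, w ξ m < a - ξ.1) ∧
       (∀ m ∈ (pderiv 1 p).support, w ξ m < a - ξ.2)) ∨
      ((∀ m ∈ (pderiv 0 q).support, w ξ m < b - ξ.1) ∧
       (∀ m ∈ (pderiv 1 q).support, w ξ m < b - ξ.2)) →
      ∀ m ∈ (Jac p q).support, a + b - ξ.1 - ξ.2 = E →
      w ξ m < E := by
    intro p q a b h0p h1p h0q h1q hstr m hm hab
    rw [← hab]
    have hsub := MvPolynomial.support_sub _ _ _ hm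
    rcases Finset.mem_union.mp hsub with h | h
    · have : w ξ m < (a - ξ.1) + (b - ξ.2) := by
        apply support_mul_w_lt h0p h1q _ m h
        rcases hstr with ⟨h', _⟩ | ⟨_, h'⟩
        · exact Or.inl h'
        · exact Or.inr h'
      linarith
    · have : w ξ m < (a - ξ.2) + (b - ξ.1) := by
        apply support_mul_w_lt h1p h0q _ m h
        rcases hstr with ⟨_, h'⟩ | ⟨h', _⟩
        · exact Or.inl h'
        · exact Or.inr h'
      linarith
  have hRw : ∀ m ∈ R.support, w ξ m < E := by
    intro m hm
    rw [hR] at hm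
    have h1 := MvPolynomial.support_add hm
    rcases Finset.mem_union.mp h1 with h2 | h3
    · rcases Finset.mem_union.mp (MvPolynomial.support_add h2) with h4 | h5
      · exact hjac_lt F (g - G) Df Dg
          (fun m hm => le_of_eq (hpdF0 m hm)) (fun m hm => le_of_eq (hpdF1 m hm))
          (fun m hm => le_of_lt (hpdg0 m hm)) (fun m hm => le_of_lt (hpdg1 m hm))
          (Or.inr ⟨hpdg0, hpdg1⟩) m h4 (by rw [hE])
      · exact hjac_lt (f - F) G Df Dg
          (fun m hm => le_of_lt (hpdf0 m hm)) (fun m hm => le_of_lt (hpdf1 m hm))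
          (fun m hm => le_of_eq (hpdG0 m hm)) (fun m hm => le_of_eq (hpdG1 m hm))
          (Or.inl ⟨hpdf0, hpdf1⟩) m h5 (by rw [hE])
    · exact hjac_lt (f - F) (g - G) Df Dg
        (fun m hm => le_of_lt (hpdf0 m hm)) (fun m hm => le_of_lt (hpdf1 m hm))
        (fun m hm => le_of_lt (hpdg0 m hm)) (fun m hm => le_of_lt (hpdg1 m hm))
        (Or.inl ⟨hpdf0, hpdf1⟩) m h3 (by rw [hE])
  exact face_eq_of_decomp ξ (Jac f g) (Jac F G) R E hdecomp hJ hQw hRw
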